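/- For a positive integer d ≥ 2, the numerical semigroup S_d = ⟨d+1, d², d²+2d, d²+3d, ..., d²+(d−1)d⟩ satisfies S_d/d = {0} ∪ {n ∈ ℕ : n ≥ d}, and hence ν(S_d/d) = d. -/

import Mathlib

def minGens (T : Set ℕ) : Set ℕ :=
  {x | x ∈ T ∧ x ≠ 0 ∧ ∀ a b : ℕ, a ∈ T → b ∈ T → a ≠ 0 → b ≠ 0 → x ≠ a + b}

theorem stmt13 (d : ℕ) (hd : 2 ≤ d) :
    {x : ℕ | d * x ∈ AddSubmonoid.closure
        (({d + 1} ∪ {x | ∃ k, k < d ∧ k ≠ 1 ∧ x = d ^ 2 + k * d}) : Set ℕ)}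
      = ({0} ∪ {n : ℕ | d ≤ n}) ∧
    Set.ncard (minGens {x : ℕ | d * x ∈ AddSubmonoid.closure
        (({d + 1} ∪ {x | ∃ k, k < d ∧ k ≠ 1 ∧ x = d ^ 2 + k * d}) : Set ℕ)}) = d := by
  set G : Set ℕ := ({d + 1} ∪ {x | ∃ k, k < d ∧ k ≠ 1 ∧ x = d ^ 2 + k * d}) with hG
  have hdpos : 0 < d := by omega
  -- invariant for forward direction
  have key : ∀ s ∈ AddSubmonoid.closure G,
      ∃ a B C, s = a * (d + 1) + B * d ^ 2 + C * d ∧ C ≤ (d - 1) * B := by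
    intro s hs
    induction hs using AddSubmonoid.closure_induction with
    | mem g hg =>
      rcases hg with hg | ⟨k, hk, hk1, rfl⟩
      · exact ⟨1, 0, 0, by simp [Set.mem_singleton_iff.mp hg], by simp⟩
      · exact ⟨0, 1, k, by ring, by omega⟩
    | zero => exact ⟨0, 0, 0, by simp, by simp⟩
    | add x y hx hy ihx ihy =>
      obtain ⟨a1, B1, C1, h1, h1'⟩ := ihx
      obtain ⟨a2, B2, C2, h2, h2'⟩ := ihy
      refine ⟨a1 + a2, B1 + B2, C1 + C2, by rw [h1, h2]; ring, ?_⟩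
      rw [Nat.mul_add]
      exact Nat.add_le_add h1' h2'
  have hcl2 : ∀ g ∈ G, g ∈ AddSubmonoid.closure G := fun g hg => AddSubmonoid.subset_closure hg
  have hgen0 : (d ^ 2 : ℕ) ∈ G := by
    right; exact ⟨0, hdpos, by omega, by ring⟩
  have hgen1 : (d + 1 : ℕ) ∈ G := by left; rfl
  have hset : {x : ℕ | d * x ∈ AddSubmonoid.closure G} = ({0} ∪ {n : ℕ | d ≤ n}) := by
    ext x
    simp only [Set.mem_setOf_eq, Set.mem_union, Set.mem_singleton_iff]
    constructor
    · intro hx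
      obtain ⟨a, B, C, heq, hle⟩ := key _ hx
      by_cases hx0 : x = 0
      · left; exact hx0
      · right
        -- d ∣ a
        have hda : d ∣ a := by
          have h1 : d ∣ a * (d + 1) + B * d ^ 2 + C * d := ⟨x, by linarith [heq]⟩
          have h2 : d ∣ a * d + B * d ^ 2 + C * d := ⟨a + B * d + C, by ring⟩
          have h3 : a = (a * (d + 1) + B * d ^ 2 + C * d) - (a * d + B * d ^ 2 + C * d) := by
            have : a * (d + 1) = a * d + a := by ring
            omega
          rw [h3]
          exact Nat.dvd_sub h1 h2
        obtain ⟨a', rfl⟩ := hda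
        have hx' : x = a' * (d + 1) + B * d + C := by
          have : d * x = d * (a' * (d + 1) + B * d + C) := by rw [heq]; ring
          exact Nat.eq_of_mul_eq_mul_left hdpos this
        rcases Nat.eq_zero_or_pos a' with rfl | ha'
        · rcases Nat.eq_zero_or_pos B with rfl | hB
          · simp at hle; omega
          · have : d ≤ B * d := Nat.le_mul_of_pos_left d hB
            omega
        · have : d + 1 ≤ a' * (d + 1) := Nat.le_mul_of_pos_left _ ha'
          omega
    · rintro (rfl | hx)
      · simpa using (AddSubmonoid.closure G).zero_mem
      · -- x ≥ d : show d * x ∈ closure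
        set m := x - d with hm
        set q := m / d with hq
        set r := m % d with hr
        have hmd : d * q + r = m := Nat.div_add_mod m d
        have hrd : r < d := Nat.mod_lt m hdpos
        have hxm : x = d + m := by omega
        have hdx : d * x = d ^ 2 + (d * q) * d + r * d := by
          rw [hxm]; rw [← hmd]; ring
        by_cases hr1 : r = 1
        · -- d*x = d • (d+1) + q • d²
          have : d * x = d • (d + 1) + q • (d ^ 2) := by
            rw [hdx, smul_eq_mul, smul_eq_mul, hr1]; ring
          rw [this]
          exact AddSubmonoid.add_mem _ (nsmul_mem (hcl2 _ hgen1) d)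
            (nsmul_mem (hcl2 _ hgen0) q)
        · have hgenr : (d ^ 2 + r * d : ℕ) ∈ G := by
            right; exact ⟨r, hrd, hr1, rfl⟩
          have : d * x = (d ^ 2 + r * d) + q • (d ^ 2) := by
            rw [hdx, smul_eq_mul]; ring
          rw [this]
          exact AddSubmonoid.add_mem _ (hcl2 _ hgenr) (nsmul_mem (hcl2 _ hgen0) q)
  refine ⟨hset, ?_⟩
  rw [hset]
  have hmg : minGens ({0} ∪ {n : ℕ | d ≤ n}) = Set.Ico d (2 * d) := by
    ext x
    simp only [minGens, Set.mem_setOf_eq, Set.mem_union, Set.mem_singleton_iff, Set.mem_Ico]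
    constructor
    · rintro ⟨hxT, hx0, hmin⟩
      have hdx : d ≤ x := by
        rcases hxT with rfl | h
        · omega
        · exact h
      refine ⟨hdx, ?_⟩
      by_contra h
      push_neg at h
      exact hmin d (x - d) (Or.inr le_rfl) (Or.inr (by omega)) (by omega) (by omega) (by omega)
    · rintro ⟨h1, h2⟩
      refine ⟨Or.inr h1, by omega, ?_⟩
      rintro a b (rfl | ha) (rfl | hb) ha0 hb0 rfl <;> omega
  rw [hmg, ← Finset.coe_Ico, Set.ncard_coe_finset, Nat.card_Ico]
  omega
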